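/- Variance of the first-order linearization of the logit factorial effect estimator (Proposition 3, variance expression): suppose 0 < P_z < 1 for all z ∈ {0,1}^K, and for a nonempty subset ℓ ⊆ {1,…,K} define the linearized statistic θ̃_ℓ = θ_ℓ + 2^{−(K−1)} Σ_{z ∈ {0,1}^K} λ_{ℓ,z} (p_z − P_z)/(P_z(1−P_z)), where θ_ℓ = 2^{−(K−1)} Σ_z λ_{ℓ,z} log(P_z/(1−P_z)). Then under a completely randomized assignment, Var(θ̃_ℓ) = 2^{−2(K−1)} ( Σ_{z} (N − N_z) S_z² / (N N_z P_z² (1−P_z)²) − (1/N) Σ_{z < z'} λ_{ℓ,z} λ_{ℓ,z'} (S_z² + S_{z'}² − S²_{z−z'})/(P_z P_{z'} (1−P_z)(1−P_{z'})) ), where the second sum is over unordered pairs of distinct treatments. -/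

import Mathlib

open Finset

/-- The finset of completely randomized assignments of `N` units to treatments in `J`
with group sizes `Nj`. -/
def assignments (N : ℕ) {J : Type*} [Fintype J] [DecidableEq J] (Nj : J → ℕ) :
    Finset (Fin N → J) :=
  Finset.univ.filter fun T => ∀ j, (Finset.univ.filter fun i => T i = j).card = Nj j

/-- Expectation with respect to the uniform distribution on completely randomized
assignments. -/
noncomputable def expect {N : ℕ} {J : Type*} [Fintype J] [DecidableEq J]
    (Nj : J → ℕ) (f : (Fin N → J) → ℝ) : ℝ :=
  (∑ T ∈ assignments N Nj, f T) / ((assignments N Nj).card : ℝ)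

/-- Variance with respect to the randomization distribution. -/
noncomputable def rvar {N : ℕ} {J : Type*} [Fintype J] [DecidableEq J]
    (Nj : J → ℕ) (f : (Fin N → J) → ℝ) : ℝ :=
  expect Nj fun T => (f T - expect Nj f) ^ 2

/-- Covariance with respect to the randomization distribution. -/
noncomputable def rcov {N : ℕ} {J : Type*} [Fintype J] [DecidableEq J]
    (Nj : J → ℕ) (f g : (Fin N → J) → ℝ) : ℝ :=
  expect Nj fun T => (f T - expect Nj f) * (g T - expect Nj g)

/-- Observed group mean `p_j` of treatment `j` under assignment `T`. -/
noncomputable def pObs {N : ℕ} {J : Type*} [DecidableEq J]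
    (Y : Fin N → J → ℝ) (Nj : J → ℕ) (j : J) (T : Fin N → J) : ℝ :=
  (∑ i ∈ Finset.univ.filter fun i => T i = j, Y i j) / (Nj j : ℝ)

/-- Population mean `P_j`. -/
noncomputable def Pmean {N : ℕ} {J : Type*} (Y : Fin N → J → ℝ) (j : J) : ℝ :=
  (∑ i, Y i j) / (N : ℝ)

/-- Population variance `S_j²`. -/
noncomputable def S2 {N : ℕ} {J : Type*} (Y : Fin N → J → ℝ) (j : J) : ℝ :=
  (∑ i, (Y i j - Pmean Y j) ^ 2) / ((N : ℝ) - 1)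

/-- Variance of unit-level differences `S²_{j-j'}`. -/
noncomputable def S2diff {N : ℕ} {J : Type*} (Y : Fin N → J → ℝ) (j j' : J) : ℝ :=
  (∑ i, (Y i j - Y i j' - (Pmean Y j - Pmean Y j')) ^ 2) / ((N : ℝ) - 1)

/-- Treatments in a `2^K` factorial experiment, indexed by `Fin (2^K)`: treatment `z`
corresponds to the element of `{0,1}^K` whose `k`-th coordinate is the `k`-th binary digit
of `z`. The contrast coefficient is `λ_{ℓ,z} = Π_{k∈ℓ} (2 z_k - 1)`. -/
def lam {K : ℕ} (ℓ : Finset (Fin K)) (z : Fin (2 ^ K)) : ℝ :=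
  ∏ k ∈ ℓ, (if Nat.testBit z.val k.val then 1 else -1)


set_option linter.unusedSectionVars false
section Aux

variable {N : ℕ} {J : Type*} [Fintype J] [DecidableEq J] {Nj : J → ℕ}

lemma mem_assign_iff {T : Fin N → J} :
    T ∈ assignments N Nj ↔ ∀ j, (Finset.univ.filter fun i => T i = j).card = Nj j := by
  simp [assignments]

lemma assignments_nonempty (hsum : ∑ j, Nj j = N) : (assignments N Nj).Nonempty := by
  have hcard : Fintype.card (Σ j : J, Fin (Nj j)) = Fintype.card (Fin N) := by
    simp [Fintype.card_sigma, hsum]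
  let e : (Σ j : J, Fin (Nj j)) ≃ Fin N := Fintype.equivOfCardEq hcard
  refine ⟨fun i => (e.symm i).1, ?_⟩
  rw [mem_assign_iff]
  intro j
  have : (Finset.univ.filter fun i => (e.symm i).1 = j).card
      = (Finset.univ.filter fun s : Σ j : J, Fin (Nj j) => s.1 = j).card := by
    apply Finset.card_bij (fun i _ => e.symm i)
    · intro a ha; simp_all
    · intro a ha b hb h; exact e.symm.injective h
    · intro b hb; exact ⟨e b, by simp_all⟩
  rw [this]
  have : (Finset.univ.filter fun s : Σ j : J, Fin (Nj j) => s.1 = j)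
      = Finset.univ.map (Function.Embedding.sigmaMk j) := by
    ext s
    simp only [mem_filter, mem_univ, true_and, Finset.mem_map, Function.Embedding.coeFn_mk]
    constructor
    · rintro rfl; exact ⟨s.2, by simp⟩
    · rintro ⟨x, -, rfl⟩; rfl
  simp [this]

lemma comp_perm_mem {T : Fin N → J} (σ : Equiv.Perm (Fin N)) (hT : T ∈ assignments N Nj) :
    T ∘ σ ∈ assignments N Nj := by
  rw [mem_assign_iff] at hT ⊢
  intro j
  have himg : (Finset.univ.filter fun i => T (σ i) = j)
      = (Finset.univ.filter fun i => T i = j).image σ.symm := by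
    ext i
    simp only [mem_filter, mem_univ, true_and, Finset.mem_image]
    constructor
    · intro h; exact ⟨σ i, h, by simp⟩
    · rintro ⟨a, ha, rfl⟩; simpa using ha
  rw [Function.comp_def, himg, Finset.card_image_of_injective _ σ.symm.injective]
  exact hT j

lemma sum_comp_perm (σ : Equiv.Perm (Fin N)) (f : (Fin N → J) → ℝ) :
    ∑ T ∈ assignments N Nj, f (T ∘ σ) = ∑ T ∈ assignments N Nj, f T := by
  apply Finset.sum_nbij' (fun T => T ∘ σ) (fun T => T ∘ σ.symm)
  · intro T hT; exact comp_perm_mem σ hT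
  · intro T hT; exact comp_perm_mem σ.symm hT
  · intro T hT; ext i; simp
  · intro T hT; ext i; simp
  · intro T hT; rfl
variable {N : ℕ} {J : Type*} [Fintype J] [DecidableEq J] {Nj : J → ℕ}

-- permutation sending k ↦ i, k' ↦ i'
lemma exists_perm_two {i i' k k' : Fin N} (h1 : i ≠ i') (h2 : k ≠ k') :
    ∃ σ : Equiv.Perm (Fin N), σ k = i ∧ σ k' = i' := by
  refine ⟨(Equiv.swap k i).trans (Equiv.swap (Equiv.swap k i k') i'), ?_, ?_⟩
  · have ha : Equiv.swap k i k' ≠ i := by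
      intro h
      exact h2 ((Equiv.swap k i).injective (h.trans (Equiv.swap_apply_left k i).symm)).symm
    simp only [Equiv.trans_apply, Equiv.swap_apply_left]
    exact Equiv.swap_apply_of_ne_of_ne (Ne.symm ha) h1
  · simp only [Equiv.trans_apply, Equiv.swap_apply_left]

lemma sum_pair_eq (g : J → J → ℝ) {i i' k k' : Fin N} (h1 : i ≠ i') (h2 : k ≠ k') :
    ∑ T ∈ assignments N Nj, g (T i) (T i')
      = ∑ T ∈ assignments N Nj, g (T k) (T k') := by
  obtain ⟨σ, hk, hk'⟩ := exists_perm_two h1 h2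
  calc ∑ T ∈ assignments N Nj, g (T i) (T i')
      = ∑ T ∈ assignments N Nj, g ((T ∘ σ) k) ((T ∘ σ) k') := by
        simp [Function.comp, hk, hk']
    _ = ∑ T ∈ assignments N Nj, g (T k) (T k') :=
        sum_comp_perm σ (fun T => g (T k) (T k'))

lemma sum_single_eq (g : J → ℝ) (i k : Fin N) :
    ∑ T ∈ assignments N Nj, g (T i) = ∑ T ∈ assignments N Nj, g (T k) := by
  calc ∑ T ∈ assignments N Nj, g (T i)
      = ∑ T ∈ assignments N Nj, g ((T ∘ Equiv.swap k i) k) := by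
        simp [Function.comp, Equiv.swap_apply_left]
    _ = _ := sum_comp_perm _ (fun T => g (T k))

lemma sum_ind_fiber {T : Fin N → J} (hT : T ∈ assignments N Nj) (z : J) :
    ∑ i, (if T i = z then (1:ℝ) else 0) = (Nj z : ℝ) := by
  rw [Finset.sum_boole]
  rw [mem_assign_iff] at hT
  norm_cast
  exact hT z

lemma sum_ind_single (hN : 0 < N) (z : J) (i : Fin N) :
    ∑ T ∈ assignments N Nj, (if T i = z then (1:ℝ) else 0)
      = ((assignments N Nj).card : ℝ) * (Nj z) / N := by
  have key : ∀ k : Fin N, ∑ T ∈ assignments N Nj, (if T k = z then (1:ℝ) else 0)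
      = ∑ T ∈ assignments N Nj, (if T i = z then (1:ℝ) else 0) := by
    intro k
    exact sum_single_eq (fun a => if a = z then (1:ℝ) else 0) k i
  have htot : (N : ℝ) * (∑ T ∈ assignments N Nj, (if T i = z then (1:ℝ) else 0))
      = ((assignments N Nj).card : ℝ) * (Nj z) := by
    calc (N : ℝ) * _ = ∑ k : Fin N, ∑ T ∈ assignments N Nj, (if T k = z then (1:ℝ) else 0) := by
          rw [Finset.sum_congr rfl (fun k _ => key k)]; simp [mul_comm]
      _ = ∑ T ∈ assignments N Nj, ∑ k : Fin N, (if T k = z then (1:ℝ) else 0) :=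
          Finset.sum_comm
      _ = ∑ T ∈ assignments N Nj, (Nj z : ℝ) :=
          Finset.sum_congr rfl (fun T hT => sum_ind_fiber hT z)
      _ = _ := by rw [Finset.sum_const, nsmul_eq_mul]
  have hN' : (N : ℝ) ≠ 0 := by positivity
  rw [eq_div_iff hN']
  linarith [htot]

lemma sum_ind_pair (hN : 2 ≤ N) (z z' : J) {i i' : Fin N} (h : i ≠ i') :
    ∑ T ∈ assignments N Nj, (if T i = z then (1:ℝ) else 0) * (if T i' = z' then 1 else 0)
      = ((assignments N Nj).card : ℝ) *
          ((Nj z : ℝ) * (Nj z') - if z = z' then (Nj z : ℝ) else 0)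
        / ((N : ℝ) * ((N : ℝ) - 1)) := by
  set A := assignments N Nj with hA
  set c := ∑ T ∈ A, (if T i = z then (1:ℝ) else 0) * (if T i' = z' then 1 else 0) with hc
  have key : ∀ k k' : Fin N, k ≠ k' →
      ∑ T ∈ A, (if T k = z then (1:ℝ) else 0) * (if T k' = z' then 1 else 0) = c :=
    fun k k' hkk =>
      sum_pair_eq (fun a b => (if a = z then (1:ℝ) else 0) * (if b = z' then 1 else 0)) hkk h
  have inner : ∀ T ∈ A,
      (∑ k : Fin N, ∑ k' ∈ Finset.univ.erase k,
        (if T k = z then (1:ℝ) else 0) * (if T k' = z' then 1 else 0))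
      = (Nj z : ℝ) * (Nj z') - (if z = z' then (Nj z : ℝ) else 0) := by
    intro T hT
    have hz := sum_ind_fiber hT z
    have hz' := sum_ind_fiber hT z'
    have hdiag : ∑ k : Fin N, (if T k = z then (1:ℝ) else 0) * (if T k = z' then 1 else 0)
        = (if z = z' then (Nj z : ℝ) else 0) := by
      rcases eq_or_ne z z' with rfl | hzz
      · rw [if_pos rfl, ← hz]
        apply Finset.sum_congr rfl
        intro k _
        by_cases hk : T k = z <;> simp [hk]
      · rw [if_neg hzz]
        apply Finset.sum_eq_zero
        intro k _
        by_cases hk : T k = z <;> simp [hk, hzz]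
    calc (∑ k : Fin N, ∑ k' ∈ Finset.univ.erase k,
            (if T k = z then (1:ℝ) else 0) * (if T k' = z' then 1 else 0))
        = ∑ k : Fin N, ((if T k = z then (1:ℝ) else 0) * (Nj z' : ℝ)
            - (if T k = z then (1:ℝ) else 0) * (if T k = z' then 1 else 0)) := by
          apply Finset.sum_congr rfl
          intro k _
          rw [← Finset.mul_sum, Finset.sum_erase_eq_sub (Finset.mem_univ k), hz']
          ring
      _ = (Nj z : ℝ) * (Nj z') - (if z = z' then (Nj z : ℝ) else 0) := by
          rw [Finset.sum_sub_distrib, ← Finset.sum_mul, hz, hdiag]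
  have count : (N : ℝ) * ((N : ℝ) - 1) * c
      = (A.card : ℝ) * ((Nj z : ℝ) * (Nj z') - if z = z' then (Nj z : ℝ) else 0) := by
    have h1 : (∑ k : Fin N, ∑ k' ∈ Finset.univ.erase k,
        ∑ T ∈ A, (if T k = z then (1:ℝ) else 0) * (if T k' = z' then 1 else 0))
        = (N : ℝ) * ((N : ℝ) - 1) * c := by
      have : ∀ k : Fin N, (∑ k' ∈ Finset.univ.erase k,
          ∑ T ∈ A, (if T k = z then (1:ℝ) else 0) * (if T k' = z' then 1 else 0))
          = ((N : ℝ) - 1) * c := by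
        intro k
        rw [Finset.sum_congr rfl (fun k' hk' => key k k' (Finset.ne_of_mem_erase hk').symm)]
        rw [Finset.sum_const, Finset.card_erase_of_mem (Finset.mem_univ k)]
        simp only [Finset.card_univ, Fintype.card_fin, nsmul_eq_mul]
        rw [Nat.cast_sub (by omega)]
        norm_num
      rw [Finset.sum_congr rfl (fun k _ => this k), Finset.sum_const]
      simp only [Finset.card_univ, Fintype.card_fin, nsmul_eq_mul]
      ring
    have h2 : (∑ k : Fin N, ∑ k' ∈ Finset.univ.erase k,
        ∑ T ∈ A, (if T k = z then (1:ℝ) else 0) * (if T k' = z' then 1 else 0))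
        = (A.card : ℝ) * ((Nj z : ℝ) * (Nj z') - if z = z' then (Nj z : ℝ) else 0) := by
      calc (∑ k : Fin N, ∑ k' ∈ Finset.univ.erase k,
          ∑ T ∈ A, (if T k = z then (1:ℝ) else 0) * (if T k' = z' then 1 else 0))
          = ∑ k : Fin N, ∑ T ∈ A, ∑ k' ∈ Finset.univ.erase k,
              (if T k = z then (1:ℝ) else 0) * (if T k' = z' then 1 else 0) := by
            exact Finset.sum_congr rfl (fun k _ => Finset.sum_comm)
        _ = ∑ T ∈ A, ∑ k : Fin N, ∑ k' ∈ Finset.univ.erase k,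
              (if T k = z then (1:ℝ) else 0) * (if T k' = z' then 1 else 0) := Finset.sum_comm
        _ = ∑ T ∈ A, ((Nj z : ℝ) * (Nj z') - if z = z' then (Nj z : ℝ) else 0) :=
            Finset.sum_congr rfl inner
        _ = _ := by rw [Finset.sum_const, nsmul_eq_mul]
    rw [← h1, h2]
  have hden : (N : ℝ) * ((N : ℝ) - 1) ≠ 0 := by
    have h2' : (2 : ℝ) ≤ (N : ℝ) := by exact_mod_cast hN
    nlinarith
  rw [eq_div_iff hden]
  linarith [count]

variable {Y : Fin N → J → ℝ}

lemma sum_centered (hN : 0 < N) (z : J) : ∑ i, (Y i z - Pmean Y z) = 0 := by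
  have hN' : (N : ℝ) ≠ 0 := by positivity
  rw [Finset.sum_sub_distrib, Finset.sum_const, Finset.card_univ, Fintype.card_fin,
    nsmul_eq_mul, Pmean]
  field_simp
  ring

lemma pObs_sub_eq {T : Fin N → J} (hT : T ∈ assignments N Nj) {z : J}
    (hNjz : (Nj z : ℝ) ≠ 0) :
    pObs Y Nj z T - Pmean Y z
      = (∑ i, (if T i = z then (1:ℝ) else 0) * (Y i z - Pmean Y z)) / (Nj z : ℝ) := by
  have h1 : ∑ i, (if T i = z then (1:ℝ) else 0) * (Y i z - Pmean Y z)
      = (∑ i ∈ Finset.univ.filter fun i => T i = z, Y i z) - (Nj z : ℝ) * Pmean Y z := by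
    have h2 : ∑ i, (if T i = z then (1:ℝ) else 0) * (Y i z - Pmean Y z)
        = (∑ i, (if T i = z then (1:ℝ) else 0) * Y i z)
          - (∑ i, (if T i = z then (1:ℝ) else 0)) * Pmean Y z := by
      rw [Finset.sum_mul, ← Finset.sum_sub_distrib]
      exact Finset.sum_congr rfl fun i _ => by ring
    rw [h2, sum_ind_fiber hT z]
    congr 1
    rw [Finset.sum_filter]
    exact Finset.sum_congr rfl fun i _ => by by_cases h : T i = z <;> simp [h]
  rw [pObs, h1]
  field_simp


lemma sum_ind_same (hN : 0 < N) (z z' : J) (i : Fin N) :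
    ∑ T ∈ assignments N Nj, (if T i = z then (1:ℝ) else 0) * (if T i = z' then 1 else 0)
      = if z = z' then ((assignments N Nj).card : ℝ) * (Nj z) / N else 0 := by
  rcases eq_or_ne z z' with rfl | hzz
  · rw [if_pos rfl, ← sum_ind_single hN z i]
    exact Finset.sum_congr rfl fun T _ => by by_cases h : T i = z <;> simp [h]
  · rw [if_neg hzz]
    exact Finset.sum_eq_zero fun T _ => by by_cases h : T i = z <;> simp [h, hzz]

lemma sum_cov (hN : 2 ≤ N) (hNj : ∀ j, 1 ≤ Nj j) (z z' : J) :
    ∑ T ∈ assignments N Nj,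
        (pObs Y Nj z T - Pmean Y z) * (pObs Y Nj z' T - Pmean Y z')
      = ((assignments N Nj).card : ℝ) *
          (if z = z' then ((N : ℝ) - (Nj z : ℝ)) * S2 Y z / ((N : ℝ) * (Nj z : ℝ))
            else -(S2 Y z + S2 Y z' - S2diff Y z z') / (2 * (N : ℝ))) := by
  have hN0 : 0 < N := by omega
  have hNR : (N : ℝ) ≠ 0 := by positivity
  have hN2 : (2 : ℝ) ≤ (N : ℝ) := by exact_mod_cast hN
  have hN1 : (N : ℝ) - 1 ≠ 0 := by nlinarith
  have hz0 : (Nj z : ℝ) ≠ 0 := by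
    have : (0 : ℝ) < (Nj z : ℝ) := by exact_mod_cast hNj z
    linarith
  have hz'0 : (Nj z' : ℝ) ≠ 0 := by
    have : (0 : ℝ) < (Nj z' : ℝ) := by exact_mod_cast hNj z'
    linarith
  set A := assignments N Nj with hA
  set M := ((assignments N Nj).card : ℝ) with hM
  set D : Fin N → J → ℝ := fun i w => Y i w - Pmean Y w with hD
  set R := ∑ i, D i z * D i z' with hR
  set dd : ℝ := if z = z' then M * (Nj z : ℝ) / N else 0 with hdd
  set e2 : ℝ := M * ((Nj z : ℝ) * (Nj z') - if z = z' then (Nj z : ℝ) else 0)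
      / ((N : ℝ) * ((N : ℝ) - 1)) with he2
  have step1 : ∑ T ∈ A, (pObs Y Nj z T - Pmean Y z) * (pObs Y Nj z' T - Pmean Y z')
      = (∑ i, ∑ i', D i z * D i' z' *
          (∑ T ∈ A, (if T i = z then (1:ℝ) else 0) * (if T i' = z' then 1 else 0)))
        / ((Nj z : ℝ) * (Nj z')) := by
    calc ∑ T ∈ A, (pObs Y Nj z T - Pmean Y z) * (pObs Y Nj z' T - Pmean Y z')
        = ∑ T ∈ A, (∑ i, ∑ i', ((if T i = z then (1:ℝ) else 0) * D i z)
            * ((if T i' = z' then (1:ℝ) else 0) * D i' z')) / ((Nj z : ℝ) * (Nj z')) := by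
          apply Finset.sum_congr rfl
          intro T hT
          rw [pObs_sub_eq hT hz0, pObs_sub_eq hT hz'0, div_mul_div_comm,
            Finset.sum_mul_sum]
      _ = (∑ T ∈ A, ∑ i, ∑ i', ((if T i = z then (1:ℝ) else 0) * D i z)
            * ((if T i' = z' then (1:ℝ) else 0) * D i' z')) / ((Nj z : ℝ) * (Nj z')) := by
          rw [Finset.sum_div]
      _ = (∑ i, ∑ T ∈ A, ∑ i', ((if T i = z then (1:ℝ) else 0) * D i z)
            * ((if T i' = z' then (1:ℝ) else 0) * D i' z')) / ((Nj z : ℝ) * (Nj z')) := by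
          rw [Finset.sum_comm]
      _ = (∑ i, ∑ i', ∑ T ∈ A, ((if T i = z then (1:ℝ) else 0) * D i z)
            * ((if T i' = z' then (1:ℝ) else 0) * D i' z')) / ((Nj z : ℝ) * (Nj z')) := by
          rw [Finset.sum_congr rfl fun i _ => Finset.sum_comm]
      _ = _ := by
          congr 1
          apply Finset.sum_congr rfl
          intro i _
          apply Finset.sum_congr rfl
          intro i' _
          rw [Finset.mul_sum]
          exact Finset.sum_congr rfl fun T _ => by ring
  have inner : ∀ i : Fin N,
      (∑ i', D i z * D i' z' *
        (∑ T ∈ A, (if T i = z then (1:ℝ) else 0) * (if T i' = z' then 1 else 0)))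
      = D i z * D i z' * dd - D i z * D i z' * e2 := by
    intro i
    rw [← Finset.sum_erase_add _ _ (Finset.mem_univ i)]
    have hpart1 : (∑ i' ∈ Finset.univ.erase i, D i z * D i' z' *
        (∑ T ∈ A, (if T i = z then (1:ℝ) else 0) * (if T i' = z' then 1 else 0)))
        = - (D i z * D i z' * e2) := by
      have : ∀ i' ∈ Finset.univ.erase i, D i z * D i' z' *
          (∑ T ∈ A, (if T i = z then (1:ℝ) else 0) * (if T i' = z' then 1 else 0))
          = D i z * e2 * D i' z' := by
        intro i' hi'
        rw [sum_ind_pair hN z z' (Ne.symm (Finset.ne_of_mem_erase hi'))]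
        rw [← he2]
        ring
      rw [Finset.sum_congr rfl this, ← Finset.mul_sum,
        Finset.sum_erase_eq_sub (Finset.mem_univ i), sum_centered hN0 z']
      ring
    rw [hpart1, sum_ind_same hN0 z z' i, ← hdd]
    ring
  rw [step1, Finset.sum_congr rfl fun i _ => inner i, Finset.sum_sub_distrib,
    ← Finset.sum_mul, ← Finset.sum_mul, ← hR]
  rcases eq_or_ne z z' with rfl | hzz
  · have hRz : R = ((N : ℝ) - 1) * S2 Y z := by
      rw [hR, S2, mul_div_assoc']
      rw [mul_comm, mul_div_assoc, div_self hN1, mul_one]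
      exact Finset.sum_congr rfl fun i _ => by rw [hD]; ring
    rw [if_pos rfl, hdd, he2, if_pos rfl, if_pos rfl, hRz]
    field_simp
    ring
  · have hkey : S2 Y z + S2 Y z' - S2diff Y z z' = 2 * R / ((N : ℝ) - 1) := by
      rw [S2, S2, S2diff, ← add_div, ← sub_div]
      have hnum : ((∑ i, (Y i z - Pmean Y z) ^ 2) + ∑ i, (Y i z' - Pmean Y z') ^ 2)
          - ∑ i, (Y i z - Y i z' - (Pmean Y z - Pmean Y z')) ^ 2 = 2 * R := by
        rw [← Finset.sum_add_distrib, ← Finset.sum_sub_distrib, hR, Finset.mul_sum]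
        exact Finset.sum_congr rfl fun i _ => by rw [hD]; ring
      rw [hnum, mul_div_assoc]
    rw [if_neg hzz, hdd, he2, if_neg hzz, if_neg hzz, hkey]
    field_simp
    ring

lemma sum_pObs_sub (hN : 0 < N) (hNj : ∀ j, 1 ≤ Nj j) (z : J) :
    ∑ T ∈ assignments N Nj, (pObs Y Nj z T - Pmean Y z) = 0 := by
  have hz0 : (Nj z : ℝ) ≠ 0 := by
    have : (0 : ℝ) < (Nj z : ℝ) := by exact_mod_cast hNj z
    linarith
  calc ∑ T ∈ assignments N Nj, (pObs Y Nj z T - Pmean Y z)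
      = ∑ T ∈ assignments N Nj,
          (∑ i, (if T i = z then (1:ℝ) else 0) * (Y i z - Pmean Y z)) / (Nj z : ℝ) :=
        Finset.sum_congr rfl fun T hT => pObs_sub_eq hT hz0
    _ = (∑ i, (Y i z - Pmean Y z) *
          (∑ T ∈ assignments N Nj, (if T i = z then (1:ℝ) else 0))) / (Nj z : ℝ) := by
        rw [← Finset.sum_div]
        congr 1
        rw [Finset.sum_comm]
        exact Finset.sum_congr rfl fun i _ => by
          rw [Finset.mul_sum]
          exact Finset.sum_congr rfl fun T _ => by ring
    _ = 0 := by
        rw [Finset.sum_congr rfl fun i (_ : i ∈ Finset.univ) => by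
          rw [sum_ind_single hN z i]]
        rw [← Finset.sum_mul, sum_centered hN z]
        simp

lemma S2diff_comm (z z' : J) : S2diff Y z z' = S2diff Y z' z := by
  rw [S2diff, S2diff]
  congr 1
  exact Finset.sum_congr rfl fun i _ => by ring

lemma sum_pairs {J' : Type*} [Fintype J'] [LinearOrder J'] (F : J' → J' → ℝ)
    (hsymm : ∀ a b, F a b = F b a) :
    ∑ a, ∑ b, F a b
      = (∑ a, F a a) + 2 * ∑ a, ∑ b ∈ Finset.univ.filter (fun b => a < b), F a b := by
  classical
  have tri : ∀ a b : J', F a b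
      = (if a < b then F a b else 0) + (if b < a then F a b else 0)
        + (if b = a then F a b else 0) := by
    intro a b
    rcases lt_trichotomy a b with h | h | h
    · rw [if_pos h, if_neg (asymm h), if_neg (ne_of_gt h)]; ring
    · rw [if_neg h.not_lt, if_neg (h ▸ h.not_lt), if_pos h.symm]
      subst h; ring
    · rw [if_neg (asymm h), if_pos h, if_neg (ne_of_lt h)]; ring
  have hsplit : ∑ a, ∑ b, F a b
      = (∑ a, ∑ b, (if a < b then F a b else 0))
        + (∑ a, ∑ b, (if b < a then F a b else 0))
        + (∑ a, ∑ b, (if b = a then F a b else 0)) := by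
    rw [← Finset.sum_add_distrib, ← Finset.sum_add_distrib]
    apply Finset.sum_congr rfl
    intro a _
    rw [← Finset.sum_add_distrib, ← Finset.sum_add_distrib]
    exact Finset.sum_congr rfl fun b _ => tri a b
  have hdiag : (∑ a, ∑ b, (if b = a then F a b else 0)) = ∑ a, F a a := by
    apply Finset.sum_congr rfl
    intro a _
    rw [Finset.sum_ite_eq' Finset.univ a (fun b => F a b), if_pos (Finset.mem_univ a)]
  have hswap : (∑ a, ∑ b, (if b < a then F a b else 0))
      = ∑ a, ∑ b, (if a < b then F a b else 0) := by
    rw [Finset.sum_comm]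
    exact Finset.sum_congr rfl fun a _ => Finset.sum_congr rfl fun b _ => by
      rcases eq_or_ne ((a : J') < b) True with _ | _
      · by_cases h : a < b <;> simp [h, hsymm a b]
      · by_cases h : a < b <;> simp [h, hsymm a b]
  have hfilter : ∀ a : J', (∑ b, (if a < b then F a b else 0))
      = ∑ b ∈ Finset.univ.filter (fun b => a < b), F a b := by
    intro a
    rw [Finset.sum_filter]
  rw [hsplit, hdiag, hswap]
  rw [Finset.sum_congr rfl fun a _ => hfilter a]
  ring

lemma lam_mul_self {K : ℕ} (ℓ : Finset (Fin K)) (z : Fin (2 ^ K)) :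
    lam ℓ z * lam ℓ z = 1 := by
  rw [lam, ← Finset.prod_mul_distrib]
  apply Finset.prod_eq_one
  intro k _
  by_cases h : Nat.testBit z.val k.val <;> simp [h]
end Aux

/-- Variance of the first-order linearization of the logit factorial effect estimator:
if `0 < P_z < 1` for all `z` then, with
`θ̃_ℓ = θ_ℓ + 2^{-(K-1)} Σ_z λ_{ℓ,z} (p_z - P_z)/(P_z(1-P_z))` where
`θ_ℓ = 2^{-(K-1)} Σ_z λ_{ℓ,z} log(P_z/(1-P_z))`,
`Var(θ̃_ℓ) = 2^{-2(K-1)} ( Σ_z (N-N_z) S_z² / (N N_z P_z² (1-P_z)²)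
  - (1/N) Σ_{z<z'} λ_{ℓ,z} λ_{ℓ,z'} (S_z² + S_{z'}² - S²_{z-z'})/(P_z P_{z'} (1-P_z)(1-P_{z'})) )`. -/
theorem rvar_linearized_logitFE {N K : ℕ} (hN : 2 ≤ N)
    (Y : Fin N → Fin (2 ^ K) → ℝ) (Nj : Fin (2 ^ K) → ℕ)
    (hpos : ∀ z, 1 ≤ Nj z) (hsum : ∑ z, Nj z = N)
    (hP0 : ∀ z, 0 < Pmean Y z) (hP1 : ∀ z, Pmean Y z < 1)
    (ℓ : Finset (Fin K)) (hℓ : ℓ.Nonempty) :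
    rvar Nj (fun T =>
        (1 / 2 ^ (K - 1)) * ∑ z, lam ℓ z * Real.log (Pmean Y z / (1 - Pmean Y z))
          + (1 / 2 ^ (K - 1)) * ∑ z, lam ℓ z *
              ((pObs Y Nj z T - Pmean Y z) / (Pmean Y z * (1 - Pmean Y z)))) =
      (1 / 2 ^ (2 * (K - 1))) *
        ((∑ z, ((N : ℝ) - (Nj z : ℝ)) * S2 Y z /
            ((N : ℝ) * (Nj z : ℝ) * (Pmean Y z) ^ 2 * (1 - Pmean Y z) ^ 2))
          - (1 / (N : ℝ)) * ∑ z, ∑ z' ∈ Finset.univ.filter (fun z' => z < z'),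
              lam ℓ z * lam ℓ z' * ((S2 Y z + S2 Y z' - S2diff Y z z') /
                (Pmean Y z * Pmean Y z' * (1 - Pmean Y z) * (1 - Pmean Y z')))) := by

  classical
  have hN0 : 0 < N := by omega
  have hAne : (assignments N Nj).Nonempty := assignments_nonempty hsum
  have hM : ((assignments N Nj).card : ℝ) ≠ 0 := by
    have := Finset.card_pos.mpr hAne
    exact_mod_cast this.ne'
  have hNR : (N : ℝ) ≠ 0 := by positivity
  have hPne : ∀ z, Pmean Y z ≠ 0 := fun z => (hP0 z).ne'
  have hQne : ∀ z, 1 - Pmean Y z ≠ 0 := fun z => by have := hP1 z; intro h; linarith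
  set a : ℝ := 1 / 2 ^ (K - 1) with ha
  set C : ℝ := a * ∑ z, lam ℓ z * Real.log (Pmean Y z / (1 - Pmean Y z)) with hC
  set c : Fin (2 ^ K) → ℝ := fun z => lam ℓ z / (Pmean Y z * (1 - Pmean Y z)) with hc
  set g : Fin (2 ^ K) → (Fin N → Fin (2 ^ K)) → ℝ :=
    fun z T => pObs Y Nj z T - Pmean Y z with hg
  have hf : (fun T => (1 / 2 ^ (K - 1) : ℝ) *
        (∑ z, lam ℓ z * Real.log (Pmean Y z / (1 - Pmean Y z)))
      + (1 / 2 ^ (K - 1) : ℝ) * ∑ z, lam ℓ z *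
          ((pObs Y Nj z T - Pmean Y z) / (Pmean Y z * (1 - Pmean Y z))))
      = fun T => C + a * ∑ z, c z * g z T := by
    funext T
    rw [hC, ha]
    congr 1
    congr 1
    exact Finset.sum_congr rfl fun z _ => by rw [hc, hg]; ring
  rw [hf]
  -- expectation is C
  have hEg : ∀ z, ∑ T ∈ assignments N Nj, g z T = 0 :=
    fun z => sum_pObs_sub hN0 hpos z
  have hE : expect Nj (fun T => C + a * ∑ z, c z * g z T) = C := by
    rw [_root_.expect, Finset.sum_add_distrib, Finset.sum_const, nsmul_eq_mul]
    have h0 : ∑ T ∈ assignments N Nj, a * ∑ z, c z * g z T = 0 := by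
      rw [← Finset.mul_sum, Finset.sum_comm]
      rw [Finset.sum_congr rfl fun z (_ : z ∈ Finset.univ) => by
        rw [← Finset.mul_sum, hEg z, mul_zero]]
      simp
    rw [h0, add_zero, mul_comm, mul_div_assoc, div_self hM, mul_one]
  rw [rvar, hE]
  have hcancel : (fun T => (C + a * ∑ z, c z * g z T - C) ^ 2)
      = fun T => a ^ 2 * ∑ z, ∑ z', (c z * c z') * (g z T * g z' T) := by
    funext T
    rw [add_sub_cancel_left, mul_pow, sq (∑ z, c z * g z T), Finset.sum_mul_sum]
    congr 1
    exact Finset.sum_congr rfl fun z _ => Finset.sum_congr rfl fun z' _ => by ring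
  rw [hcancel]
  -- compute the expectation of the quadratic form
  set V : Fin (2 ^ K) → Fin (2 ^ K) → ℝ := fun z z' =>
    if z = z' then ((N : ℝ) - (Nj z : ℝ)) * S2 Y z / ((N : ℝ) * (Nj z : ℝ))
    else -(S2 Y z + S2 Y z' - S2diff Y z z') / (2 * (N : ℝ)) with hV
  have hexp : expect Nj (fun T => a ^ 2 * ∑ z, ∑ z', (c z * c z') * (g z T * g z' T))
      = a ^ 2 * ∑ z, ∑ z', (c z * c z') * V z z' := by
    rw [_root_.expect, ← Finset.mul_sum, Finset.sum_comm]
    rw [Finset.sum_congr rfl fun z (_ : z ∈ Finset.univ) => Finset.sum_comm]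
    have hinner : ∀ z z' : Fin (2 ^ K),
        ∑ T ∈ assignments N Nj, (c z * c z') * (g z T * g z' T)
          = ((assignments N Nj).card : ℝ) * ((c z * c z') * V z z') := by
      intro z z'
      rw [← Finset.mul_sum, hg]
      rw [sum_cov hN hpos z z', hV]
      ring
    rw [Finset.sum_congr rfl fun z (_ : z ∈ Finset.univ) =>
      Finset.sum_congr rfl fun z' (_ : z' ∈ Finset.univ) => hinner z z']
    have hpull : (∑ z : Fin (2 ^ K), ∑ z' : Fin (2 ^ K),
        ((assignments N Nj).card : ℝ) * ((c z * c z') * V z z'))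
        = ((assignments N Nj).card : ℝ) * ∑ z, ∑ z', (c z * c z') * V z z' := by
      rw [Finset.mul_sum]
      exact Finset.sum_congr rfl fun z _ => (Finset.mul_sum _ _ _).symm
    rw [hpull]
    field_simp
  rw [hexp]
  -- split into diagonal and off-diagonal
  have hsymmF : ∀ z z' : Fin (2 ^ K), (c z * c z') * V z z' = (c z' * c z) * V z' z := by
    intro z z'
    rcases eq_or_ne z z' with rfl | hzz
    · ring
    · rw [hV]
      simp only [if_neg hzz, if_neg (Ne.symm hzz)]
      rw [S2diff_comm (Y := Y) z z']
      ring
  rw [sum_pairs (fun z z' => (c z * c z') * V z z') (fun z z' => hsymmF z z')]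
  -- final algebra
  have ha2 : a ^ 2 = 1 / 2 ^ (2 * (K - 1)) := by
    rw [ha, div_pow, one_pow, ← pow_mul, mul_comm (K - 1) 2]
  have hdiag : (∑ z, (c z * c z) * V z z)
      = ∑ z, ((N : ℝ) - (Nj z : ℝ)) * S2 Y z /
          ((N : ℝ) * (Nj z : ℝ) * (Pmean Y z) ^ 2 * (1 - Pmean Y z) ^ 2) := by
    apply Finset.sum_congr rfl
    intro z _
    have hNz : (Nj z : ℝ) ≠ 0 := by
      have : (0 : ℝ) < (Nj z : ℝ) := by exact_mod_cast hpos z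
      linarith
    rw [hV]
    simp only [eq_self_iff_true, if_true]
    rw [hc]
    rw [div_mul_div_comm, lam_mul_self ℓ z]
    rw [div_mul_div_comm, one_mul]
    rw [div_eq_div_iff (by
        exact mul_ne_zero (mul_ne_zero (mul_ne_zero (hPne z) (hQne z))
          (mul_ne_zero (hPne z) (hQne z))) (mul_ne_zero hNR hNz))
      (mul_ne_zero (mul_ne_zero (mul_ne_zero hNR hNz) (pow_ne_zero 2 (hPne z)))
        (pow_ne_zero 2 (hQne z)))]
    ring
  have hoff : ∀ z z' : Fin (2 ^ K), z < z' → 2 * ((c z * c z') * V z z')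
      = -(1 / (N : ℝ)) * (lam ℓ z * lam ℓ z' * ((S2 Y z + S2 Y z' - S2diff Y z z') /
          (Pmean Y z * Pmean Y z' * (1 - Pmean Y z) * (1 - Pmean Y z')))) := by
    intro z z' hlt
    rw [hV]
    simp only [if_neg (ne_of_lt hlt)]
    rw [hc]
    rw [div_mul_div_comm, div_mul_div_comm]
    have hD2 : Pmean Y z * (1 - Pmean Y z) * (Pmean Y z' * (1 - Pmean Y z')) * (2 * (N : ℝ))
        ≠ 0 := by
      exact mul_ne_zero (mul_ne_zero (mul_ne_zero (hPne z) (hQne z))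
        (mul_ne_zero (hPne z') (hQne z'))) (mul_ne_zero two_ne_zero hNR)
    rw [← mul_div_assoc, div_eq_iff hD2]
    have hD : Pmean Y z * Pmean Y z' * (1 - Pmean Y z) * (1 - Pmean Y z') ≠ 0 :=
      mul_ne_zero (mul_ne_zero (mul_ne_zero (hPne z) (hPne z')) (hQne z)) (hQne z')
    have e1 : (Pmean Y z * Pmean Y z' * (1 - Pmean Y z) * (1 - Pmean Y z')) *
        (Pmean Y z * Pmean Y z' * (1 - Pmean Y z) * (1 - Pmean Y z'))⁻¹ = 1 := mul_inv_cancel₀ hD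
    have e2 : (1 / (N : ℝ)) * N = 1 := by rw [one_div, inv_mul_cancel₀ hNR]
    linear_combination (2 * lam ℓ z * lam ℓ z' * (S2 Y z + S2 Y z' - S2diff Y z z') *
      ((1 / (N : ℝ)) * N)) * e1 + (2 * lam ℓ z * lam ℓ z' * (S2 Y z + S2 Y z' - S2diff Y z z')) * e2
  have h2off : 2 * (∑ z, ∑ z' ∈ Finset.univ.filter (fun z' => z < z'), (c z * c z') * V z z')
      = -((1 / (N : ℝ)) * ∑ z, ∑ z' ∈ Finset.univ.filter (fun z' => z < z'),
          lam ℓ z * lam ℓ z' * ((S2 Y z + S2 Y z' - S2diff Y z z') /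
            (Pmean Y z * Pmean Y z' * (1 - Pmean Y z) * (1 - Pmean Y z')))) := by
    calc 2 * (∑ z, ∑ z' ∈ Finset.univ.filter (fun z' => z < z'), (c z * c z') * V z z')
        = ∑ z, ∑ z' ∈ Finset.univ.filter (fun z' => z < z'), 2 * ((c z * c z') * V z z') := by
          rw [Finset.mul_sum]
          exact Finset.sum_congr rfl fun z _ => Finset.mul_sum _ _ _
      _ = ∑ z, ∑ z' ∈ Finset.univ.filter (fun z' => z < z'),
            -(1 / (N : ℝ)) * (lam ℓ z * lam ℓ z' * ((S2 Y z + S2 Y z' - S2diff Y z z') /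
              (Pmean Y z * Pmean Y z' * (1 - Pmean Y z) * (1 - Pmean Y z')))) :=
          Finset.sum_congr rfl fun z _ => Finset.sum_congr rfl fun z' hz' =>
            hoff z z' (Finset.mem_filter.mp hz').2
      _ = _ := by
          rw [← neg_mul, Finset.mul_sum]
          exact Finset.sum_congr rfl fun z _ => by
            rw [Finset.mul_sum]
  rw [mul_add, hdiag, h2off, ha2]
  ring
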